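/- In ×_m P_n with n ≥ 5, every inner corner vertex (all coordinates in {2, n-1}) has degree 2m, has m neighbors of degree 2m and m neighbors of degree 2m-1, and its leverage centrality equals 1/(8m-2). -/

import Mathlib

open SimpleGraph Finset

/-- Degree of a vertex (classical decidability so arbitrary graphs work). -/
noncomputable def deg {V : Type*} [Fintype V] (G : SimpleGraph V) (v : V) : ℕ :=
  letI : DecidableRel G.Adj := Classical.decRel _
  G.degree v

/-- Neighbor finset of a vertex. -/
noncomputable def nbrs {V : Type*} [Fintype V] (G : SimpleGraph V) (v : V) : Finset V :=
  letI : DecidableRel G.Adj := Classical.decRel _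
  G.neighborFinset v

/-- Leverage centrality of a vertex. -/
noncomputable def lev {V : Type*} [Fintype V] (G : SimpleGraph V) (v : V) : ℚ :=
  (1 / (deg G v : ℚ)) *
    ∑ u ∈ nbrs G v, ((deg G v : ℚ) - (deg G u : ℚ)) / ((deg G v : ℚ) + (deg G u : ℚ))

/-- The lattice `×_m P_n`: Cartesian product of `m` paths on `n` vertices.
Vertices are `m`-tuples of coordinates in `Fin n`; two vertices are adjacent
iff they differ in exactly one coordinate, by exactly 1. -/
def lattice (m n : ℕ) : SimpleGraph (Fin m → Fin n) where
  Adj v w := ∃ i, ((v i : ℕ) + 1 = (w i : ℕ) ∨ (w i : ℕ) + 1 = (v i : ℕ)) ∧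
    ∀ j, j ≠ i → v j = w j
  symm := by
    constructor
    rintro v w ⟨i, h, hj⟩
    exact ⟨i, h.symm, fun j hne => (hj j hne).symm⟩
  loopless := by
    constructor
    rintro v ⟨i, h, -⟩
    omega

lemma mem_nbrs {V : Type*} [Fintype V] (G : SimpleGraph V) (v u : V) :
    u ∈ nbrs G v ↔ G.Adj v u := by
  classical
  simp [nbrs, SimpleGraph.mem_neighborFinset]

lemma deg_eq_card {V : Type*} [Fintype V] (G : SimpleGraph V) (v : V) :
    deg G v = (nbrs G v).card := rfl

/-- neighbors of a path vertex -/
noncomputable def pathNbrs (n : ℕ) (x : Fin n) : Finset (Fin n) :=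
  letI := Classical.dec
  univ.filter (fun y => (x : ℕ) + 1 = (y : ℕ) ∨ (y : ℕ) + 1 = (x : ℕ))

lemma mem_pathNbrs {n : ℕ} {x y : Fin n} :
    y ∈ pathNbrs n x ↔ ((x : ℕ) + 1 = (y : ℕ) ∨ (y : ℕ) + 1 = (x : ℕ)) := by
  classical
  simp [pathNbrs]

lemma nbrs_lattice (m n : ℕ) (v : Fin m → Fin n) :
    nbrs (lattice m n) v =
      univ.biUnion (fun i => (pathNbrs n (v i)).image (fun y => Function.update v i y)) := by
  ext u
  simp only [mem_nbrs, mem_biUnion, mem_image, mem_univ, true_and, mem_pathNbrs]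
  constructor
  · rintro ⟨i, h, hj⟩
    refine ⟨i, u i, h, ?_⟩
    funext j
    by_cases hji : j = i
    · subst hji; simp
    · rw [Function.update_of_ne hji]; exact hj j hji
  · rintro ⟨i, y, hy, rfl⟩
    exact ⟨i, by simpa using hy, fun j hji => (Function.update_of_ne hji _ _).symm⟩

lemma update_mem_pathNbrs_ne {n : ℕ} {x y : Fin n} (h : y ∈ pathNbrs n x) : y ≠ x := by
  rw [mem_pathNbrs] at h
  intro he; subst he; omega

lemma deg_lattice (m n : ℕ) (v : Fin m → Fin n) :
    deg (lattice m n) v = ∑ i, (pathNbrs n (v i)).card := by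
  rw [deg_eq_card, nbrs_lattice, card_biUnion]
  · refine Finset.sum_congr rfl fun i _ => ?_
    apply card_image_of_injective
    intro a b hab
    have := congrFun hab i
    simpa using this
  · intro i _ j _ hij
    simp only [Finset.disjoint_left, mem_image]
    rintro u ⟨a, ha, rfl⟩ ⟨b, hb, hba⟩
    have h1 := congrFun hba i
    rw [Function.update_self, Function.update_of_ne hij] at h1
    exact update_mem_pathNbrs_ne ha h1.symm

lemma pathNbrs_card_interior {n : ℕ} {x : Fin n} (h0 : 0 < (x:ℕ)) (h1 : (x:ℕ) < n - 1) :
    (pathNbrs n x).card = 2 := by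
  have hn : 2 ≤ n := by omega
  have he : pathNbrs n x = {⟨(x:ℕ)+1, by omega⟩, ⟨(x:ℕ)-1, by omega⟩} := by
    ext y
    simp only [mem_pathNbrs, mem_insert, mem_singleton, Fin.ext_iff]
    omega
  rw [he, card_insert_of_notMem, card_singleton]
  simp only [mem_singleton, Fin.ext_iff]
  omega

lemma pathNbrs_card_bd {n : ℕ} {x : Fin n} (hn : 2 ≤ n) (h : (x:ℕ) = 0 ∨ (x:ℕ) = n-1) :
    (pathNbrs n x).card = 1 := by
  rcases h with h | h
  · have he : pathNbrs n x = {⟨1, by omega⟩} := by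
      ext y; simp only [mem_pathNbrs, mem_singleton, Fin.ext_iff]; omega
    simp [he]
  · have he : pathNbrs n x = {⟨n-2, by omega⟩} := by
      ext y; simp only [mem_pathNbrs, mem_singleton, Fin.ext_iff]; omega
    simp [he]

lemma deg_inner (m n : ℕ) (hn : 5 ≤ n) (v : Fin m → Fin n)
    (hv : ∀ i, (v i : ℕ) = 1 ∨ (v i : ℕ) = n - 2) :
    deg (lattice m n) v = 2 * m := by
  rw [deg_lattice]
  rw [Finset.sum_congr rfl (fun i _ => pathNbrs_card_interior
    (by rcases hv i with h | h <;> omega) (by rcases hv i with h | h <;> omega))]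
  simp [mul_comm]

lemma deg_update (m n : ℕ) (hn : 5 ≤ n) (v : Fin m → Fin n)
    (hv : ∀ i, (v i : ℕ) = 1 ∨ (v i : ℕ) = n - 2) (i : Fin m) (y : Fin n) :
    deg (lattice m n) (Function.update v i y) = (pathNbrs n y).card + 2 * (m - 1) := by
  rw [deg_lattice, ← Finset.add_sum_erase _ _ (mem_univ i), Function.update_self]
  congr 1
  have h2 : ∀ j ∈ univ.erase i, (pathNbrs n (Function.update v i y j)).card = 2 := by
    intro j hj
    rw [Function.update_of_ne (Finset.mem_erase.mp hj).1]
    exact pathNbrs_card_interior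
      (by rcases hv j with h | h <;> omega) (by rcases hv j with h | h <;> omega)
  rw [Finset.sum_congr rfl h2, Finset.sum_const, card_erase_of_mem (mem_univ i),
    card_univ, Fintype.card_fin, smul_eq_mul]
  ring

section Inner

variable {m n : ℕ} (hn : 5 ≤ n) (v : Fin m → Fin n)
  (hv : ∀ i, (v i : ℕ) = 1 ∨ (v i : ℕ) = n - 2)

include hn hv in
lemma nbr_deg (hm : 1 ≤ m) (u : Fin m → Fin n) (hu : u ∈ nbrs (lattice m n) v) :
    deg (lattice m n) u = 2 * m ∨ deg (lattice m n) u = 2 * m - 1 := by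
  rw [nbrs_lattice] at hu
  simp only [mem_biUnion, mem_univ, true_and, mem_image] at hu
  obtain ⟨i, y, hy, rfl⟩ := hu
  rw [deg_update m n hn v hv i y]
  rw [mem_pathNbrs] at hy
  by_cases hb : (y : ℕ) = 0 ∨ (y : ℕ) = n - 1
  · right; rw [pathNbrs_card_bd (by omega) hb]; omega
  · left
    push_neg at hb
    rw [pathNbrs_card_interior (by omega) (by omega)]
    omega

include hn hv in
lemma filter_out_eq (hm : 1 ≤ m) :
    ((nbrs (lattice m n) v).filter (fun u => deg (lattice m n) u = 2 * m - 1)) =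
    univ.image (fun i => Function.update v i
      (if (v i : ℕ) = 1 then (⟨0, by omega⟩ : Fin n) else ⟨n - 1, by omega⟩)) := by
  ext u
  simp only [mem_filter, nbrs_lattice, mem_biUnion, mem_univ, true_and, mem_image]
  constructor
  · rintro ⟨⟨i, y, hy, rfl⟩, hdeg⟩
    refine ⟨i, ?_⟩
    rw [deg_update m n hn v hv i y] at hdeg
    rw [mem_pathNbrs] at hy
    have hb : (y : ℕ) = 0 ∨ (y : ℕ) = n - 1 := by
      by_contra hb
      push_neg at hb
      rw [pathNbrs_card_interior (by omega) (by omega)] at hdeg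
      omega
    rcases hv i with h | h
    · rw [if_pos h]
      have hye : y = (⟨0, by omega⟩ : Fin n) := by
        apply Fin.ext; simp only [Fin.val_mk]; omega
      rw [hye]
    · rw [if_neg (by omega)]
      have hye : y = (⟨n - 1, by omega⟩ : Fin n) := by
        apply Fin.ext; simp only [Fin.val_mk]; omega
      rw [hye]
  · rintro ⟨i, rfl⟩
    rcases hv i with h | h
    · rw [if_pos h]
      constructor
      · exact ⟨i, _, by rw [mem_pathNbrs]; simp only [Fin.val_mk]; omega, rfl⟩
      · rw [deg_update m n hn v hv i _, pathNbrs_card_bd (by omega) (by simp)]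
        omega
    · rw [if_neg (by omega)]
      constructor
      · exact ⟨i, _, by rw [mem_pathNbrs]; simp only [Fin.val_mk]; omega, rfl⟩
      · rw [deg_update m n hn v hv i _, pathNbrs_card_bd (by omega) (by simp)]
        omega

include hn hv in
lemma filter_in_eq (hm : 1 ≤ m) :
    ((nbrs (lattice m n) v).filter (fun u => deg (lattice m n) u = 2 * m)) =
    univ.image (fun i => Function.update v i
      (if (v i : ℕ) = 1 then (⟨2, by omega⟩ : Fin n) else ⟨n - 3, by omega⟩)) := by
  ext u
  simp only [mem_filter, nbrs_lattice, mem_biUnion, mem_univ, true_and, mem_image]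
  constructor
  · rintro ⟨⟨i, y, hy, rfl⟩, hdeg⟩
    refine ⟨i, ?_⟩
    rw [deg_update m n hn v hv i y] at hdeg
    rw [mem_pathNbrs] at hy
    have hb : ¬ ((y : ℕ) = 0 ∨ (y : ℕ) = n - 1) := by
      intro hb
      rw [pathNbrs_card_bd (by omega) hb] at hdeg
      omega
    push_neg at hb
    rcases hv i with h | h
    · rw [if_pos h]
      have hye : y = (⟨2, by omega⟩ : Fin n) := by
        apply Fin.ext; simp only [Fin.val_mk]; omega
      rw [hye]
    · rw [if_neg (by omega)]
      have hye : y = (⟨n - 3, by omega⟩ : Fin n) := by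
        apply Fin.ext; simp only [Fin.val_mk]; omega
      rw [hye]
  · rintro ⟨i, rfl⟩
    rcases hv i with h | h
    · rw [if_pos h]
      constructor
      · exact ⟨i, _, by rw [mem_pathNbrs]; simp only [Fin.val_mk]; omega, rfl⟩
      · rw [deg_update m n hn v hv i _,
          pathNbrs_card_interior (by simp only [Fin.val_mk]; omega) (by simp only [Fin.val_mk]; omega)]
        omega
    · rw [if_neg (by omega)]
      constructor
      · exact ⟨i, _, by rw [mem_pathNbrs]; simp only [Fin.val_mk]; omega, rfl⟩
      · rw [deg_update m n hn v hv i _,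
          pathNbrs_card_interior (by simp only [Fin.val_mk]; omega) (by simp only [Fin.val_mk]; omega)]
        omega

lemma card_image_update (c : Fin m → Fin n) (hc : ∀ i, (c i : ℕ) ≠ (v i : ℕ)) :
    (univ.image (fun i => Function.update v i (c i))).card = m := by
  rw [Finset.card_image_of_injective _ ?_, card_univ, Fintype.card_fin]
  intro i j hij
  by_contra hne
  have h1 := congrFun hij i
  simp only [Function.update_self, Function.update_of_ne hne] at h1
  exact hc i (by rw [h1])

end Inner

theorem lattice_inner_corner (m n : ℕ) (hm : 1 ≤ m) (hn : 5 ≤ n)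
    (v : Fin m → Fin n) (hv : ∀ i, (v i : ℕ) = 1 ∨ (v i : ℕ) = n - 2) :
    deg (lattice m n) v = 2 * m ∧
      ((nbrs (lattice m n) v).filter (fun u => deg (lattice m n) u = 2 * m)).card = m ∧
      ((nbrs (lattice m n) v).filter (fun u => deg (lattice m n) u = 2 * m - 1)).card = m ∧
      lev (lattice m n) v = 1 / (8 * (m : ℚ) - 2) := by
  classical
  have hd : deg (lattice m n) v = 2 * m := deg_inner m n hn v hv
  have hcin : ((nbrs (lattice m n) v).filter
      (fun u => deg (lattice m n) u = 2 * m)).card = m := by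
    rw [filter_in_eq hn v hv hm]
    apply card_image_update
    intro i
    rcases hv i with h | h
    · rw [if_pos h]; simp only [Fin.val_mk]; omega
    · rw [if_neg (by omega)]; simp only [Fin.val_mk]; omega
  have hcout : ((nbrs (lattice m n) v).filter
      (fun u => deg (lattice m n) u = 2 * m - 1)).card = m := by
    rw [filter_out_eq hn v hv hm]
    apply card_image_update
    intro i
    rcases hv i with h | h
    · rw [if_pos h]; simp only [Fin.val_mk]; omega
    · rw [if_neg (by omega)]; simp only [Fin.val_mk]; omega
  refine ⟨hd, hcin, hcout, ?_⟩
  unfold lev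
  rw [hd]
  rw [← Finset.sum_filter_add_sum_filter_not (nbrs (lattice m n) v)
    (fun u => deg (lattice m n) u = 2 * m)]
  have hnotf : (nbrs (lattice m n) v).filter (fun u => ¬ deg (lattice m n) u = 2 * m) =
      (nbrs (lattice m n) v).filter (fun u => deg (lattice m n) u = 2 * m - 1) := by
    apply Finset.filter_congr
    intro u hu
    have := nbr_deg hn v hv hm u hu
    constructor <;> intro <;> omega
  rw [hnotf]
  have h1 : ∑ u ∈ (nbrs (lattice m n) v).filter (fun u => deg (lattice m n) u = 2 * m),
      (((2 * m : ℕ) : ℚ) - (deg (lattice m n) u : ℚ)) /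
        (((2 * m : ℕ) : ℚ) + (deg (lattice m n) u : ℚ)) = 0 := by
    apply Finset.sum_eq_zero
    intro u hu
    rw [(mem_filter.mp hu).2]
    simp
  have h2 : ∑ u ∈ (nbrs (lattice m n) v).filter (fun u => deg (lattice m n) u = 2 * m - 1),
      (((2 * m : ℕ) : ℚ) - (deg (lattice m n) u : ℚ)) /
        (((2 * m : ℕ) : ℚ) + (deg (lattice m n) u : ℚ)) = m * (1 / (4 * (m : ℚ) - 1)) := by
    have hterm : ∀ u ∈ (nbrs (lattice m n) v).filter
        (fun u => deg (lattice m n) u = 2 * m - 1),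
        (((2 * m : ℕ) : ℚ) - (deg (lattice m n) u : ℚ)) /
          (((2 * m : ℕ) : ℚ) + (deg (lattice m n) u : ℚ)) = 1 / (4 * (m : ℚ) - 1) := by
      intro u hu
      rw [(mem_filter.mp hu).2, Nat.cast_sub (by omega : 1 ≤ 2 * m)]
      push_cast
      rw [show (2 * (m : ℚ) - (2 * m - 1)) = 1 by ring,
        show (2 * (m : ℚ) + (2 * m - 1)) = 4 * m - 1 by ring]
    rw [Finset.sum_congr rfl hterm, Finset.sum_const, hcout, nsmul_eq_mul]
  rw [h1, h2, zero_add]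
  have hm1 : (1 : ℚ) ≤ (m : ℚ) := by exact_mod_cast hm
  have h0 : (m : ℚ) ≠ 0 := by linarith
  have h4 : 4 * (m : ℚ) - 1 ≠ 0 := by intro h; nlinarith
  have h8 : 8 * (m : ℚ) - 2 ≠ 0 := by intro h; nlinarith
  push_cast
  rw [show (8 * (m : ℚ) - 2) = 2 * (4 * m - 1) by ring]
  field_simp
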